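/- arXiv:2311.07081 — 6 statements merged into one kernel-verified Lean document; each statement's English description precedes it below -/
import Mathlib

section
/- Let T ∈ ℂ^{N_T×N_T} be a nonzero Hermitian positive semidefinite matrix, let ρ > 0, and let N_S be a positive integer with N_S ≥ rank(T). Then there exists a unique δ ≥ 0 satisfying the fixed-point equation δ = (1/N_S)·tr(T·(I_{N_T} + (ρ/(1+ρδ))·T)^{-1}), and this δ is strictly positive. -/
open Matrix
open scoped ComplexOrder

lemma trace_aux {n : ℕ} {T : Matrix (Fin n) (Fin n) ℂ} (hT : T.PosSemidef)
    {c : ℝ} (hc : 0 ≤ c) :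
    (T * (1 + (c : ℂ) • T)⁻¹).trace
      = ((∑ i, hT.1.eigenvalues i / (1 + c * hT.1.eigenvalues i) : ℝ) : ℂ) := by
  classical
  set lam := hT.1.eigenvalues with hlam
  have hpos : ∀ i, (0:ℝ) < 1 + c * lam i := fun i =>
    add_pos_of_pos_of_nonneg one_pos (mul_nonneg hc (hT.eigenvalues_nonneg i))
  set U : Matrix (Fin n) (Fin n) ℂ := (hT.1.eigenvectorUnitary : Matrix (Fin n) (Fin n) ℂ)
    with hUdef
  have hU : U * star U = 1 := (Matrix.mem_unitaryGroup_iff).mp hT.1.eigenvectorUnitary.2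
  have hU' : star U * U = 1 := (Matrix.mem_unitaryGroup_iff').mp hT.1.eigenvectorUnitary.2
  have key : ∀ (D E : Matrix (Fin n) (Fin n) ℂ),
      (U * D * star U) * (U * E * star U) = U * (D * E) * star U := by
    intro D E
    simp only [Matrix.mul_assoc]
    rw [← Matrix.mul_assoc (star U) U (E * star U), hU', Matrix.one_mul]
  have hspec : T = U * diagonal (fun i => (lam i : ℂ)) * star U := by
    have := hT.1.spectral_theorem
    rw [Unitary.conjStarAlgAut_apply] at this
    exact this
  have hone : (1 : Matrix (Fin n) (Fin n) ℂ) = U * diagonal (fun _ => (1:ℂ)) * star U := by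
    rw [diagonal_one, mul_one, hU]
  have hsmul : (c:ℂ) • ((U * diagonal fun i => ((lam i : ℝ):ℂ)) * star U)
      = (U * diagonal fun i => ((c * lam i : ℝ):ℂ)) * star U := by
    rw [← Matrix.smul_mul, ← Matrix.mul_smul]
    congr 2
    ext i j
    by_cases h : i = j <;> simp [h, Matrix.diagonal_apply_eq, Matrix.diagonal_apply_ne]
  have hsum : 1 + (c : ℂ) • T = U * diagonal (fun i => ((1 + c * lam i : ℝ) : ℂ)) * star U := by
    rw [hspec, hone, hsmul, ← Matrix.add_mul, ← Matrix.mul_add, diagonal_add]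
    congr 2
    funext i
    push_cast
    ring
  have hinv : (1 + (c : ℂ) • T)⁻¹
      = U * diagonal (fun i => (((1 + c * lam i : ℝ) : ℂ))⁻¹) * star U := by
    apply Matrix.inv_eq_right_inv
    rw [hsum, key, diagonal_mul_diagonal]
    have : (fun i => ((1 + c * lam i : ℝ) : ℂ) * (((1 + c * lam i : ℝ) : ℂ))⁻¹)
        = fun _ => (1:ℂ) := by
      funext i
      rw [mul_inv_cancel₀]
      exact_mod_cast (hpos i).ne'
    rw [this, diagonal_one, mul_one, hU]
  rw [hinv, hspec, key, trace_mul_cycle, ← Matrix.mul_assoc, hU', Matrix.one_mul,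
    diagonal_mul_diagonal, trace_diagonal]
  push_cast

  simp [div_eq_mul_inv]


lemma real_fixedPoint {m : ℕ} (lam : Fin m → ℝ) (hlam : ∀ i, 0 ≤ lam i)
    (hne : ∃ i, lam i ≠ 0) {ρ : ℝ} (hρ : 0 < ρ) {NS : ℕ} (hNS1 : 1 ≤ NS)
    (hcard : (Finset.univ.filter (fun i => lam i ≠ 0)).card ≤ NS) :
    (∃! δ : ℝ, 0 ≤ δ ∧ δ = (NS:ℝ)⁻¹ * ∑ i, lam i * (1 + ρ*δ) / (1 + ρ*δ + ρ * lam i)) ∧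
    ∀ δ : ℝ, 0 ≤ δ → δ = (NS:ℝ)⁻¹ * ∑ i, lam i * (1 + ρ*δ) / (1 + ρ*δ + ρ * lam i) → 0 < δ := by
  classical
  set F : ℝ → ℝ := fun δ => (NS:ℝ)⁻¹ * ∑ i, lam i * (1 + ρ*δ) / (1 + ρ*δ + ρ * lam i) with hF
  have hNSpos : (0:ℝ) < (NS:ℝ) := by exact_mod_cast hNS1
  have hNSinv : (0:ℝ) < (NS:ℝ)⁻¹ := inv_pos.mpr hNSpos
  have hD : ∀ δ : ℝ, 0 ≤ δ → ∀ i, (0:ℝ) < 1 + ρ*δ + ρ * lam i := by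
    intro δ hδ i
    have := mul_nonneg hρ.le hδ
    have := mul_nonneg hρ.le (hlam i)
    linarith
  have h1 : ∀ δ : ℝ, 0 ≤ δ → (0:ℝ) < 1 + ρ*δ := by
    intro δ hδ; nlinarith
  -- positivity
  have hposit : ∀ δ : ℝ, 0 ≤ δ → δ = F δ → 0 < δ := by
    intro δ hδ heq
    rw [heq]
    apply mul_pos hNSinv
    obtain ⟨i₀, hi₀⟩ := hne
    apply Finset.sum_pos'
    · intro i _
      exact div_nonneg (mul_nonneg (hlam i) (h1 δ hδ).le) (hD δ hδ i).le
    · refine ⟨i₀, Finset.mem_univ _, ?_⟩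
      exact div_pos (mul_pos ((hlam i₀).lt_of_ne' hi₀) (h1 δ hδ)) (hD δ hδ i₀)
  -- uniqueness
  have huniq : ∀ a b : ℝ, 0 ≤ a → 0 ≤ b → a = F a → b = F b → a < b → False := by
    intro a b ha hb hfa hfb hab
    set s := Finset.univ.filter (fun i => lam i ≠ 0) with hs
    have hsne : s.Nonempty := by
      obtain ⟨i₀, hi₀⟩ := hne
      exact ⟨i₀, by simp [hs, hi₀]⟩
    have hdiff : ∀ i, lam i * (1 + ρ*b) / (1 + ρ*b + ρ * lam i)
        - lam i * (1 + ρ*a) / (1 + ρ*a + ρ * lam i)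
        = (ρ * lam i)^2 * (b - a) / ((1 + ρ*a + ρ * lam i) * (1 + ρ*b + ρ * lam i)) := by
      intro i
      have h₁ := (hD a ha i).ne'
      have h₂ := (hD b hb i).ne'
      rw [div_sub_div _ _ h₂ h₁, div_eq_div_iff (mul_ne_zero h₂ h₁) (mul_ne_zero h₁ h₂)]
      ring
    have hbound : ∀ i ∈ s, lam i * (1 + ρ*b) / (1 + ρ*b + ρ * lam i)
        - lam i * (1 + ρ*a) / (1 + ρ*a + ρ * lam i) < b - a := by
      intro i hi
      have hli : 0 < lam i := (hlam i).lt_of_ne' (by simpa [hs] using hi)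
      have hrl : 0 < ρ * lam i := mul_pos hρ hli
      have hlt1 : ρ * lam i < 1 + ρ*a + ρ * lam i := by nlinarith
      have hlt2 : ρ * lam i < 1 + ρ*b + ρ * lam i := by nlinarith
      rw [hdiff i]
      rw [div_lt_iff₀ (mul_pos (hD a ha i) (hD b hb i))]
      have hba : 0 < b - a := sub_pos.mpr hab
      have hsq : (ρ * lam i)^2 < (1 + ρ*a + ρ * lam i) * (1 + ρ*b + ρ * lam i) := by
        nlinarith [mul_lt_mul_of_pos' hlt1 hlt2 hrl (hD a ha i)]
      nlinarith [hsq, hba]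
    have hzero : ∀ i ∈ Finset.univ, i ∉ s →
        lam i * (1 + ρ*b) / (1 + ρ*b + ρ * lam i)
        - lam i * (1 + ρ*a) / (1 + ρ*a + ρ * lam i) = 0 := by
      intro i _ hi
      have : lam i = 0 := by simpa [hs] using hi
      simp [this]
    have hsum : ∑ i, (lam i * (1 + ρ*b) / (1 + ρ*b + ρ * lam i)
        - lam i * (1 + ρ*a) / (1 + ρ*a + ρ * lam i))
        < s.card * (b - a) := by
      rw [← Finset.sum_subset (Finset.filter_subset _ _) hzero]
      calc ∑ i ∈ s, (lam i * (1 + ρ*b) / (1 + ρ*b + ρ * lam i)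
            - lam i * (1 + ρ*a) / (1 + ρ*a + ρ * lam i))
          < ∑ _i ∈ s, (b - a) := Finset.sum_lt_sum_of_nonempty hsne hbound
        _ = s.card * (b - a) := by rw [Finset.sum_const, nsmul_eq_mul]
    have h4 : F b - F a = (NS:ℝ)⁻¹ * ∑ i, (lam i * (1 + ρ*b) / (1 + ρ*b + ρ * lam i)
        - lam i * (1 + ρ*a) / (1 + ρ*a + ρ * lam i)) := by
      simp only [hF]
      rw [Finset.sum_sub_distrib, mul_sub]
    have h3 : b - a = (NS:ℝ)⁻¹ * ∑ i, (lam i * (1 + ρ*b) / (1 + ρ*b + ρ * lam i)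
        - lam i * (1 + ρ*a) / (1 + ρ*a + ρ * lam i)) := by linarith [h4, hfa, hfb]
    have hcard' : (s.card : ℝ) ≤ (NS:ℝ) := by exact_mod_cast hcard
    have hba : 0 < b - a := sub_pos.mpr hab
    have h5 := mul_lt_mul_of_pos_left hsum hNSinv
    have h6 : (NS:ℝ)⁻¹ * ((s.card:ℝ) * (b-a)) ≤ (NS:ℝ)⁻¹ * ((NS:ℝ)*(b-a)) :=
      mul_le_mul_of_nonneg_left (mul_le_mul_of_nonneg_right hcard' hba.le) hNSinv.le
    have h7 : (NS:ℝ)⁻¹ * ((NS:ℝ)*(b-a)) = b - a := by field_simp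
    linarith
  -- existence
  set S : ℝ := (NS:ℝ)⁻¹ * ∑ i, lam i with hSdef
  have hS0 : 0 ≤ S := mul_nonneg hNSinv.le (Finset.sum_nonneg fun i _ => hlam i)
  have hcont : ContinuousOn (fun δ => F δ - δ) (Set.Icc 0 S) := by
    apply ContinuousOn.sub _ continuousOn_id
    apply ContinuousOn.mul continuousOn_const
    apply continuousOn_finset_sum
    intro i _
    apply ContinuousOn.div
    · exact ((continuous_const.mul ((continuous_const).add
        (continuous_const.mul continuous_id))).continuousOn)
    · exact (((continuous_const.add (continuous_const.mul continuous_id)).add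
        continuous_const).continuousOn)
    · intro x hx
      exact (hD x hx.1 i).ne'
  have hg0 : 0 ≤ F 0 - 0 := by
    simp only [sub_zero]
    apply mul_nonneg hNSinv.le
    apply Finset.sum_nonneg
    intro i _
    exact div_nonneg (mul_nonneg (hlam i) (by norm_num : (0:ℝ) ≤ 1 + ρ*0)) (hD 0 le_rfl i).le
  have hgS : F S - S ≤ 0 := by
    have : F S ≤ S := by
      rw [hF, hSdef]
      apply mul_le_mul_of_nonneg_left _ hNSinv.le
      apply Finset.sum_le_sum
      intro i _
      rw [div_le_iff₀ (hD S hS0 i)]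
      nlinarith [hlam i, mul_nonneg hρ.le (hlam i), h1 S hS0]
    linarith
  have hmem : (0:ℝ) ∈ Set.Icc (F S - S) (F 0 - 0) := ⟨hgS, hg0⟩
  obtain ⟨δ, hδmem, hδeq⟩ := intermediate_value_Icc' hS0 hcont hmem
  have hδ0 : 0 ≤ δ := hδmem.1
  have hδfix : δ = F δ := by linarith [sub_eq_zero.mp hδeq]
  refine ⟨⟨δ, ⟨hδ0, hδfix⟩, ?_⟩, hposit⟩
  rintro y ⟨hy0, hyfix⟩
  rcases lt_trichotomy y δ with h | h | h
  · exact absurd (huniq y δ hy0 hδ0 hyfix hδfix h) not_false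
  · exact h
  · exact absurd (huniq δ y hδ0 hy0 hδfix hyfix h) not_false

/-- The fixed-point equation `δ = (1/N_S)·tr(T·(I + (ρ/(1+ρδ))·T)⁻¹)`. -/
def FixedPointEq {n : ℕ} (T : Matrix (Fin n) (Fin n) ℂ) (ρ : ℝ) (NS : ℕ) (δ : ℝ) : Prop :=
  (δ : ℂ) = (NS : ℂ)⁻¹ * (T * (1 + ((ρ / (1 + ρ * δ) : ℝ) : ℂ) • T)⁻¹).trace

/-- **Existence, uniqueness and positivity of the fixed point** (paper, eq. (7)). -/
theorem fixedPoint_existsUnique_pos {NT : ℕ} (T : Matrix (Fin NT) (Fin NT) ℂ)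
    (hT : T.PosSemidef) (hT0 : T ≠ 0) (ρ : ℝ) (hρ : 0 < ρ)
    (NS : ℕ) (hNS1 : 1 ≤ NS) (hNSr : T.rank ≤ NS) :
    (∃! δ : ℝ, 0 ≤ δ ∧ FixedPointEq T ρ NS δ) ∧
      ∀ δ : ℝ, 0 ≤ δ → FixedPointEq T ρ NS δ → 0 < δ := by
  classical
  set lam := hT.1.eigenvalues with hlamdef
  have hlamnn : ∀ i, 0 ≤ lam i := fun i => hT.eigenvalues_nonneg i
  have hne : ∃ i, lam i ≠ 0 := by
    by_contra h
    push_neg at h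
    apply hT0
    have hs := hT.1.spectral_theorem
    rw [Unitary.conjStarAlgAut_apply] at hs
    have hz : (RCLike.ofReal ∘ hT.1.eigenvalues : Fin NT → ℂ) = 0 := by
      funext i
      simp only [Function.comp_apply, Pi.zero_apply]
      rw [show hT.1.eigenvalues i = 0 from h i]
      simp
    rw [hz] at hs
    rw [show Matrix.diagonal (0 : Fin NT → ℂ) = 0 from Matrix.diagonal_zero,
      Matrix.mul_zero, Matrix.zero_mul] at hs
    exact hs
  have hcard : (Finset.univ.filter (fun i => lam i ≠ 0)).card ≤ NS := by
    have h2 := hT.1.rank_eq_card_non_zero_eigs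
    rw [Fintype.card_subtype] at h2
    simp only [hlamdef]
    rw [← h2]
    exact hNSr
  have hiff : ∀ δ : ℝ, 0 ≤ δ → (FixedPointEq T ρ NS δ ↔
      δ = (NS:ℝ)⁻¹ * ∑ i, lam i * (1 + ρ*δ) / (1 + ρ*δ + ρ * lam i)) := by
    intro δ hδ
    have h1δ : (0:ℝ) < 1 + ρ*δ := by nlinarith
    have hc : (0:ℝ) ≤ ρ / (1 + ρ*δ) := div_nonneg hρ.le h1δ.le
    have hterm : ∀ i, lam i / (1 + ρ/(1+ρ*δ) * lam i)
        = lam i * (1+ρ*δ)/(1+ρ*δ+ρ*lam i) := by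
      intro i
      have hd : 1 + ρ/(1+ρ*δ) * lam i = (1+ρ*δ+ρ*lam i)/(1+ρ*δ) := by
        field_simp
      rw [hd, div_div_eq_mul_div]
    have hsum : ∑ i, lam i / (1 + ρ/(1+ρ*δ) * lam i)
        = ∑ i, lam i * (1+ρ*δ)/(1+ρ*δ+ρ*lam i) :=
      Finset.sum_congr rfl fun i _ => hterm i
    simp only [FixedPointEq]
    rw [trace_aux hT hc, ← hlamdef, hsum,
      show ((NS:ℂ))⁻¹ * (((∑ i, lam i * (1+ρ*δ)/(1+ρ*δ+ρ*lam i) : ℝ)) : ℂ)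
        = (((NS:ℝ)⁻¹ * ∑ i, lam i * (1+ρ*δ)/(1+ρ*δ+ρ*lam i) : ℝ) : ℂ) from by
          push_cast; ring]
    exact ⟨fun h => by exact_mod_cast h, fun h => by exact_mod_cast h⟩
  obtain ⟨hEU, hpos⟩ := real_fixedPoint lam hlamnn hne hρ hNS1 hcard
  constructor
  · obtain ⟨δ, ⟨hδ0, hδe⟩, huni⟩ := hEU
    exact ⟨δ, ⟨hδ0, (hiff δ hδ0).mpr hδe⟩,
      fun y hy => huni y ⟨hy.1, (hiff y hy.1).mp hy.2⟩⟩
  · intro δ h0 hf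
    exact hpos δ h0 ((hiff δ h0).mp hf)
end

section
/- Let T ∈ ℂ^{N_T×N_T} be Hermitian positive semidefinite with rank r, let ρ > 0, let N_S ≥ 1 be an integer, and let δ ≥ 0 satisfy the fixed-point equation δ = (1/N_S)·tr(T·(I_{N_T} + (ρ/(1+ρδ))·T)^{-1}). Then ρ·N_S·δ ≤ r·(1 + ρδ); consequently, if N_S > r then δ ≤ r/(ρ·(N_S − r)). -/
open Matrix
open scoped ComplexOrder

private lemma conj_add_aux {n : ℕ} (U D E : Matrix (Fin n) (Fin n) ℂ) :
    U * D * star U + U * E * star U = U * (D + E) * star U := by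
  rw [Matrix.mul_add, Matrix.add_mul]

private lemma conj_mul_aux {n : ℕ} (U : Matrix (Fin n) (Fin n) ℂ) (h : star U * U = 1)
    (D E : Matrix (Fin n) (Fin n) ℂ) :
    (U * D * star U) * (U * E * star U) = U * (D * E) * star U := by
  simp only [Matrix.mul_assoc]
  rw [← Matrix.mul_assoc (star U) U, h, Matrix.one_mul]

private lemma conj_trace_aux {n : ℕ} (U : Matrix (Fin n) (Fin n) ℂ) (h : star U * U = 1)
    (D : Matrix (Fin n) (Fin n) ℂ) : (U * D * star U).trace = D.trace := by
  rw [Matrix.trace_mul_cycle, h, Matrix.one_mul]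

private lemma conj_smul_aux {n : ℕ} (U D : Matrix (Fin n) (Fin n) ℂ) (a : ℂ) :
    a • (U * D * star U) = U * (a • D) * star U := by
  rw [Matrix.mul_smul, Matrix.smul_mul]

/-- **Bound on the fixed point** (intermediate step (22) in the proof of Proposition 2):
`ρ·N_S·δ ≤ r·(1 + ρδ)`, hence `δ ≤ r/(ρ(N_S − r))` when `N_S > r = rank T`. -/
theorem fixedPoint_bound {NT : ℕ} (T : Matrix (Fin NT) (Fin NT) ℂ) (hT : T.PosSemidef)
    (ρ : ℝ) (hρ : 0 < ρ) (NS : ℕ) (hNS : 1 ≤ NS)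
    (δ : ℝ) (hδ : 0 ≤ δ) (hfix : FixedPointEq T ρ NS δ) :
    ρ * NS * δ ≤ (T.rank : ℝ) * (1 + ρ * δ) ∧
      (T.rank < NS → δ ≤ (T.rank : ℝ) / (ρ * ((NS : ℝ) - (T.rank : ℝ)))) := by
  have hH := hT.1
  set c : ℝ := ρ / (1 + ρ * δ) with hc_def
  have h1ρδ : (0:ℝ) < 1 + ρ * δ := by positivity
  have hc : 0 < c := div_pos hρ h1ρδ
  set lam : Fin NT → ℝ := hH.eigenvalues with hl
  have hlamnn : ∀ i, 0 ≤ lam i := hT.eigenvalues_nonneg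
  have hden : ∀ i, (0:ℝ) < 1 + c * lam i := fun i => by
    have := hlamnn i; nlinarith
  set U : Matrix (Fin NT) (Fin NT) ℂ :=
    (hH.eigenvectorUnitary : Matrix (Fin NT) (Fin NT) ℂ) with hU
  have hUU : U * star U = 1 := (Matrix.mem_unitaryGroup_iff).mp hH.eigenvectorUnitary.2
  have hUU' : star U * U = 1 := (Matrix.mem_unitaryGroup_iff').mp hH.eigenvectorUnitary.2
  have hspec : T = U * diagonal (RCLike.ofReal ∘ lam) * star U := hH.spectral_theorem
  set M : Matrix (Fin NT) (Fin NT) ℂ :=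
    U * diagonal (fun i => (((1 + c * lam i)⁻¹ : ℝ) : ℂ)) * star U with hM
  have hone : (1 : Matrix (Fin NT) (Fin NT) ℂ) = U * 1 * star U := by
    rw [Matrix.mul_one, hUU]
  have h1 : (1 : Matrix (Fin NT) (Fin NT) ℂ) + (c : ℂ) • T
      = U * diagonal (fun i => (((1 + c * lam i) : ℝ) : ℂ)) * star U := by
    rw [hspec, conj_smul_aux]
    nth_rewrite 1 [hone]
    rw [conj_add_aux]
    congr 2
    ext i j
    rcases eq_or_ne i j with rfl | hij
    · simp [Matrix.add_apply, Matrix.smul_apply, Matrix.one_apply_eq, diagonal_apply_eq,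
        Function.comp]
    · simp [Matrix.add_apply, Matrix.smul_apply, Matrix.one_apply_ne hij,
        diagonal_apply_ne _ hij]
  have hkey : (1 + (c : ℂ) • T) * M = 1 := by
    rw [h1, hM, conj_mul_aux U hUU', diagonal_mul_diagonal]
    have : (fun i => (((1 + c * lam i) : ℝ) : ℂ) * (((1 + c * lam i)⁻¹ : ℝ) : ℂ))
        = fun _ => (1 : ℂ) := by
      funext i
      rw [← Complex.ofReal_mul, mul_inv_cancel₀ (hden i).ne']
      simp
    rw [this, diagonal_one, Matrix.mul_one, hUU]
  have hinv : (1 + (c : ℂ) • T)⁻¹ = M := Matrix.inv_eq_right_inv hkey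
  have htrace : (T * (1 + (c : ℂ) • T)⁻¹).trace
      = ((∑ i, lam i / (1 + c * lam i) : ℝ) : ℂ) := by
    rw [hinv, hM, hspec, conj_mul_aux U hUU', diagonal_mul_diagonal,
      conj_trace_aux U hUU', trace_diagonal]
    push_cast
    simp [Function.comp, div_eq_mul_inv]
  have hNS0 : (NS : ℂ) ≠ 0 := by exact_mod_cast Nat.cast_ne_zero.mpr (by omega)
  have hreal : (NS : ℝ) * δ = ∑ i, lam i / (1 + c * lam i) := by
    have hfe := hfix
    rw [FixedPointEq, htrace] at hfe
    have h2 : (NS : ℂ) * δ = ((∑ i, lam i / (1 + c * lam i) : ℝ) : ℂ) := by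
      rw [hfe, ← mul_assoc, mul_inv_cancel₀ hNS0, one_mul]
    exact_mod_cast h2
  have hrank : (T.rank : ℝ) = (Finset.univ.filter (fun i => lam i ≠ 0)).card := by
    rw [hH.rank_eq_card_non_zero_eigs]
    norm_cast
    simp [Fintype.card_subtype]
    convert rfl
  have hsum : ∑ i, lam i / (1 + c * lam i) ≤ (T.rank : ℝ) / c := by
    have hbound : ∀ i ∈ Finset.univ,
        lam i / (1 + c * lam i) ≤ if lam i ≠ 0 then 1 / c else 0 := by
      intro i _
      by_cases h : lam i = 0
      · simp [h]
      · simp only [if_pos h]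
        rw [div_le_div_iff₀ (hden i) hc]
        nlinarith [hlamnn i]
    calc ∑ i, lam i / (1 + c * lam i) ≤ ∑ i, if lam i ≠ 0 then 1 / c else 0 :=
          Finset.sum_le_sum hbound
      _ = (Finset.univ.filter (fun i => lam i ≠ 0)).card * (1 / c) := by
          rw [Finset.sum_ite, Finset.sum_const, Finset.sum_const_zero, add_zero,
            nsmul_eq_mul]
      _ = (T.rank : ℝ) / c := by rw [hrank]; ring
  have hmain : ρ * NS * δ ≤ (T.rank : ℝ) * (1 + ρ * δ) := by
    have h1' : (NS : ℝ) * δ ≤ (T.rank : ℝ) / c := hreal ▸ hsum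
    have h2 : (T.rank : ℝ) / c = (T.rank : ℝ) * (1 + ρ * δ) / ρ := by
      rw [hc_def]; field_simp
    rw [h2, div_eq_mul_inv] at h1'
    calc ρ * NS * δ = (NS * δ) * ρ := by ring
      _ ≤ ((T.rank : ℝ) * (1 + ρ * δ) * ρ⁻¹) * ρ :=
          mul_le_mul_of_nonneg_right h1' hρ.le
      _ = (T.rank : ℝ) * (1 + ρ * δ) := by field_simp
  refine ⟨hmain, fun hlt => ?_⟩
  have hlt' : (T.rank : ℝ) < NS := by exact_mod_cast hlt
  have hpos : 0 < ρ * ((NS : ℝ) - T.rank) := mul_pos hρ (by linarith)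
  rw [le_div_iff₀ hpos]
  nlinarith [hmain]
end

section
/- Let T ∈ ℂ^{N_T×N_T} be Hermitian positive semidefinite with rank r, let λ > 0, let N_S ≥ r be a positive integer, and let δ ≥ 0 satisfy the fixed-point equation δ = (1/N_S)·tr(T·(I_{N_T} + (λ/(1+λδ))·T)^{-1}). Then ρ̄(λ,T,N_S,δ) ≥ ((N_S − r)/N_S)·log det(I_{N_T} + λ·T), where ρ̄(λ,T,N_S,δ) = log det(I_{N_T} + (λ/(1+λδ))T) + N_S·log(1+λδ) − N_S·λδ/(1+λδ). -/
open Matrix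
open scoped ComplexOrder

section Aux

variable {n : ℕ} {T : Matrix (Fin n) (Fin n) ℂ}

lemma one_add_smul_eq' (hH : T.IsHermitian) (c : ℂ) :
    1 + c • T = (hH.eigenvectorUnitary : Matrix (Fin n) (Fin n) ℂ) *
      Matrix.diagonal (fun i => 1 + c * hH.eigenvalues i) *
      star (hH.eigenvectorUnitary : Matrix (Fin n) (Fin n) ℂ) := by
  set U : Matrix (Fin n) (Fin n) ℂ := (hH.eigenvectorUnitary : Matrix (Fin n) (Fin n) ℂ) with hUdef
  have hU : U * star U = 1 := Unitary.coe_mul_star_self _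
  have hdiag : Matrix.diagonal (fun i => 1 + c * (hH.eigenvalues i : ℂ)) =
      1 + c • Matrix.diagonal (fun i => (hH.eigenvalues i : ℂ)) := by
    ext i j
    by_cases h : i = j <;> simp [Matrix.diagonal_apply, Matrix.one_apply, h]
  rw [hdiag, Matrix.mul_add, Matrix.add_mul, Matrix.mul_one, hU, mul_smul_comm,
    smul_mul_assoc]
  congr 1
  exact congrArg (c • ·) hH.spectral_theorem

lemma det_one_add_smul (hH : T.IsHermitian) (c : ℂ) :
    (1 + c • T).det = ∏ i, (1 + c * hH.eigenvalues i) := by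
  have h2 : (hH.eigenvectorUnitary : Matrix (Fin n) (Fin n) ℂ) *
      star (hH.eigenvectorUnitary : Matrix (Fin n) (Fin n) ℂ) = 1 := Unitary.coe_mul_star_self _
  rw [one_add_smul_eq' hH c, Matrix.det_mul_right_comm, h2, Matrix.one_mul, Matrix.det_diagonal]

lemma conj_mul_conj (U : Matrix (Fin n) (Fin n) ℂ) (h1 : star U * U = 1)
    (v w : Fin n → ℂ) :
    (U * Matrix.diagonal v * star U) * (U * Matrix.diagonal w * star U)
      = U * Matrix.diagonal (fun i => v i * w i) * star U := by
  have h1' : ∀ Y : Matrix (Fin n) (Fin n) ℂ, star U * (U * Y) = Y := fun Y => by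
    rw [← Matrix.mul_assoc, h1, Matrix.one_mul]
  simp only [Matrix.mul_assoc, h1', ← Matrix.diagonal_mul_diagonal]

lemma inv_one_add_smul (hH : T.IsHermitian) (c : ℂ)
    (hc : ∀ i, 1 + c * hH.eigenvalues i ≠ 0) :
    (1 + c • T)⁻¹ = (hH.eigenvectorUnitary : Matrix (Fin n) (Fin n) ℂ) *
      Matrix.diagonal (fun i => (1 + c * hH.eigenvalues i)⁻¹) *
      star (hH.eigenvectorUnitary : Matrix (Fin n) (Fin n) ℂ) := by
  apply Matrix.inv_eq_right_inv
  rw [one_add_smul_eq' hH c,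
    conj_mul_conj _ (Unitary.coe_star_mul_self _)]
  have : (fun i => (1 + c * hH.eigenvalues i) * (1 + c * hH.eigenvalues i)⁻¹)
      = fun _ => (1 : ℂ) := funext fun i => mul_inv_cancel₀ (hc i)
  have h2 : (hH.eigenvectorUnitary : Matrix (Fin n) (Fin n) ℂ) *
      star (hH.eigenvectorUnitary : Matrix (Fin n) (Fin n) ℂ) = 1 := Unitary.coe_mul_star_self _
  rw [this, Matrix.diagonal_one, Matrix.mul_one, h2]

lemma trace_mul_inv_one_add_smul (hH : T.IsHermitian) (c : ℂ)
    (hc : ∀ i, 1 + c * hH.eigenvalues i ≠ 0) :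
    (T * (1 + c • T)⁻¹).trace = ∑ i, (hH.eigenvalues i : ℂ) * (1 + c * hH.eigenvalues i)⁻¹ := by
  set U : Matrix (Fin n) (Fin n) ℂ := (hH.eigenvectorUnitary : Matrix (Fin n) (Fin n) ℂ)
  rw [inv_one_add_smul hH c hc]
  have e1 : (T * (U * Matrix.diagonal (fun i => (1 + c * hH.eigenvalues i)⁻¹) * star U)).trace
      = ((U * Matrix.diagonal (RCLike.ofReal ∘ hH.eigenvalues) * star U) *
         (U * Matrix.diagonal (fun i => (1 + c * hH.eigenvalues i)⁻¹) * star U)).trace :=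
    congrArg (fun A => (A *
      (U * Matrix.diagonal (fun i => (1 + c * hH.eigenvalues i)⁻¹) * star U)).trace)
      hH.spectral_theorem
  have h1 : star U * U = 1 := Unitary.coe_star_mul_self _
  rw [e1, conj_mul_conj _ h1, Matrix.trace_mul_comm,
    ← Matrix.mul_assoc, h1, Matrix.one_mul, Matrix.trace_diagonal]
  rfl

lemma self_div_le_log {x : ℝ} (hx : 0 ≤ x) : x / (1 + x) ≤ Real.log (1 + x) := by
  have h1x : (0:ℝ) < 1 + x := by linarith
  have h := Real.log_le_sub_one_of_pos (inv_pos.2 h1x)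
  rw [Real.log_inv] at h
  have : 1 - (1 + x)⁻¹ ≤ Real.log (1 + x) := by linarith
  calc x / (1 + x) = 1 - (1 + x)⁻¹ := by field_simp; ring
    _ ≤ _ := this

lemma log_det_re (hT : T.PosSemidef) {c : ℝ} (hc : 0 ≤ c) :
    Real.log ((1 + ((c : ℝ) : ℂ) • T).det.re)
      = ∑ i, Real.log (1 + c * hT.1.eigenvalues i) := by
  have h : (1 + ((c : ℝ) : ℂ) • T).det
      = ((∏ i, (1 + c * hT.1.eigenvalues i) : ℝ) : ℂ) := by
    rw [det_one_add_smul hT.1 ((c : ℝ) : ℂ)]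
    push_cast
    rfl
  rw [h, Complex.ofReal_re, Real.log_prod]
  intro i _
  have := hT.eigenvalues_nonneg i
  positivity

end Aux

/-- `ρ̄(λ,T,N_S,δ)`, the closed-form per-eigenvalue sensing mutual information (eq. (7)). -/
noncomputable def rhoBar {n : ℕ} (lam : ℝ) (T : Matrix (Fin n) (Fin n) ℂ)
    (NS : ℕ) (δ : ℝ) : ℝ :=
  Real.log ((1 + ((lam / (1 + lam * δ) : ℝ) : ℂ) • T).det.re)
    + (NS : ℝ) * Real.log (1 + lam * δ) - (NS : ℝ) * (lam * δ / (1 + lam * δ))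

set_option maxHeartbeats 1000000 in
/-- **Per-eigenvalue lower bound** (eq. (21), the key step of Proposition 2):
`ρ̄(λ,T,N_S,δ) ≥ ((N_S − r)/N_S)·log det(I + λT)` with `r = rank T`. -/
theorem rhoBar_lower_bound {NT : ℕ} (T : Matrix (Fin NT) (Fin NT) ℂ) (hT : T.PosSemidef)
    (lam : ℝ) (hlam : 0 < lam) (NS : ℕ) (hNS1 : 1 ≤ NS) (hNSr : T.rank ≤ NS)
    (δ : ℝ) (hδ : 0 ≤ δ) (hfix : FixedPointEq T lam NS δ) :
    rhoBar lam T NS δ ≥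
      (((NS : ℝ) - (T.rank : ℝ)) / (NS : ℝ)) *
        Real.log ((1 + ((lam : ℝ) : ℂ) • T).det.re) := by
  set e : Fin NT → ℝ := hT.1.eigenvalues with he_def
  have he : ∀ i, 0 ≤ e i := fun i => hT.eigenvalues_nonneg i
  set p : ℝ := 1 + lam * δ with hp_def
  have hp1 : (1:ℝ) ≤ p := by nlinarith
  have hp : (0:ℝ) < p := by linarith
  set μ : ℝ := lam / p with hμ_def
  have hμ0 : 0 ≤ μ := div_nonneg hlam.le hp.le
  have hμlam : μ ≤ lam := by
    rw [hμ_def, div_le_iff₀ hp]; nlinarith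
  have hμp : μ * p = lam := div_mul_cancel₀ lam hp.ne'
  have hNpos : (0:ℝ) < (NS:ℝ) := by exact_mod_cast hNS1
  -- positivity of 1 + μ e i
  have hpos : ∀ i, (0:ℝ) < 1 + μ * e i := fun i => by have := he i; positivity
  have hc : ∀ i, (1 : ℂ) + ((μ:ℝ):ℂ) * hT.1.eigenvalues i ≠ 0 := by
    intro i
    have : ((1 + μ * e i : ℝ) : ℂ) ≠ 0 := by
      exact_mod_cast (hpos i).ne'
    simpa [he_def] using (by push_cast at this ⊢; exact this : (1 : ℂ) + (μ:ℂ) * (e i:ℂ) ≠ 0)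
  -- the fixed point equation in real form
  have htr := trace_mul_inv_one_add_smul hT.1 ((μ:ℝ):ℂ) hc
  have hfixC : (δ : ℂ) = (((NS:ℝ)⁻¹ * ∑ i, e i * (1 + μ * e i)⁻¹ : ℝ) : ℂ) := by
    rw [hfix]
    show (NS : ℂ)⁻¹ * (T * (1 + ((lam / (1 + lam * δ) : ℝ) : ℂ) • T)⁻¹).trace = _
    rw [show ((lam / (1 + lam * δ) : ℝ) : ℂ) = ((μ:ℝ):ℂ) by rw [hμ_def, hp_def], htr]
    push_cast
    rfl
  have hfixR : (NS:ℝ) * δ = ∑ i, e i / (1 + μ * e i) := by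
    have hre : δ = (NS:ℝ)⁻¹ * ∑ i, e i * (1 + μ * e i)⁻¹ := Complex.ofReal_injective hfixC
    rw [hre, ← mul_assoc, mul_inv_cancel₀ hNpos.ne', one_mul]
    exact Finset.sum_congr rfl fun i _ => (div_eq_mul_inv _ _).symm
  -- key real quantities
  set S : ℝ := ∑ i, Real.log (1 + μ * e i) with hS_def
  set L : ℝ := ∑ i, Real.log (1 + lam * e i) with hL_def
  set lp : ℝ := Real.log p with hlp_def
  set q : ℝ := lam * δ / p with hq_def
  have hq0 : 0 ≤ q := by positivity
  have hlp0 : 0 ≤ lp := Real.log_nonneg hp1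
  have hS0 : 0 ≤ S := Finset.sum_nonneg fun i _ => Real.log_nonneg (by nlinarith [he i])
  have hL0 : 0 ≤ L := Finset.sum_nonneg fun i _ => Real.log_nonneg (by nlinarith [he i])
  have hB : q ≤ lp := by
    have := self_div_le_log (mul_nonneg hlam.le hδ)
    simpa [hq_def, hp_def, hlp_def] using this
  have hC1 : (NS:ℝ) * q ≤ S := by
    have hqS : (NS:ℝ) * q = ∑ i, μ * e i / (1 + μ * e i) := by
      have h1 : (NS:ℝ) * q = μ * ((NS:ℝ) * δ) := by
        rw [hq_def, hμ_def]; field_simp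
      rw [h1, hfixR, Finset.mul_sum]
      exact Finset.sum_congr rfl fun i _ => (mul_div_assoc _ _ _).symm
    rw [hqS]
    exact Finset.sum_le_sum fun i _ => by
      have := self_div_le_log (mul_nonneg hμ0 (he i)); simpa using this
  have hC2 : S ≤ L := Finset.sum_le_sum fun i _ => by
    apply Real.log_le_log (hpos i)
    nlinarith [he i]
  -- rank = number of nonzero eigenvalues
  have hrank : (T.rank : ℝ) = ((Finset.univ.filter fun i => e i ≠ 0).card : ℝ) := by
    rw [hT.1.rank_eq_card_non_zero_eigs, Fintype.card_subtype]
  set r : ℝ := ((Finset.univ.filter fun i => e i ≠ 0).card : ℝ) with hr_def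
  have hr0 : 0 ≤ r := by positivity
  have hrN : r ≤ (NS:ℝ) := by rw [← hrank]; exact_mod_cast hNSr
  have hA : L ≤ S + r * lp := by
    have hLsplit : L = ∑ i ∈ Finset.univ.filter (fun i => e i ≠ 0),
        Real.log (1 + lam * e i) := by
      rw [hL_def]
      refine (Finset.sum_subset (Finset.filter_subset _ _) ?_).symm
      intro i _ hi
      simp only [Finset.mem_filter, Finset.mem_univ, true_and, not_not] at hi
      simp [hi]
    have step : ∀ i ∈ Finset.univ.filter (fun i => e i ≠ 0),
        Real.log (1 + lam * e i) ≤ Real.log (1 + μ * e i) + lp := by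
      intro i _
      rw [hlp_def, ← Real.log_mul (hpos i).ne' hp.ne']
      apply Real.log_le_log (by nlinarith [he i])
      have : (1 + μ * e i) * p = p + lam * e i := by rw [add_mul, one_mul, mul_right_comm, hμp]
      rw [this]; nlinarith
    calc L ≤ ∑ i ∈ Finset.univ.filter (fun i => e i ≠ 0),
          (Real.log (1 + μ * e i) + lp) := by rw [hLsplit]; exact Finset.sum_le_sum step
      _ = (∑ i ∈ Finset.univ.filter (fun i => e i ≠ 0), Real.log (1 + μ * e i)) + r * lp := by
          rw [Finset.sum_add_distrib, Finset.sum_const, nsmul_eq_mul]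
      _ ≤ S + r * lp := by
          gcongr
          apply Finset.sum_le_sum_of_subset_of_nonneg (Finset.filter_subset _ _)
          intro i _ _
          exact Real.log_nonneg (by nlinarith [he i])
  -- assemble
  have hgoal_lhs : rhoBar lam T NS δ = S + (NS:ℝ) * lp - (NS:ℝ) * q := by
    show Real.log ((1 + ((μ : ℝ) : ℂ) • T).det.re) + (NS:ℝ) * Real.log p - (NS:ℝ) * q
      = S + (NS:ℝ) * lp - (NS:ℝ) * q
    rw [log_det_re hT hμ0]
  have hgoal_rhs : Real.log ((1 + ((lam : ℝ) : ℂ) • T).det.re) = L := log_det_re hT hlam.le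
  rw [hgoal_lhs, hgoal_rhs, hrank, ge_iff_le, div_mul_eq_mul_div, div_le_iff₀ hNpos]
  nlinarith [mul_nonneg hr0 (sub_nonneg.2 (hC1.trans hC2)),
    mul_nonneg (mul_nonneg hNpos.le (sub_nonneg.2 hrN)) (sub_nonneg.2 hB),
    mul_le_mul_of_nonneg_right hA hNpos.le]
end

section
/- Let R_T ∈ ℂ^{N_T×N_T} be Hermitian positive semidefinite with positive semidefinite square root R_T^{1/2}, let F ∈ ℂ^{N_T×K}, and set T = R_T^{1/2} F F^H R_T^{1/2}. Let λ_1,…,λ_{N_R} ≥ 0 and let N_S be a positive integer with N_S ≥ K. For each j with λ_j > 0, let δ_j ≥ 0 satisfy the fixed-point equation δ_j = (1/N_S)·tr(T·(I_{N_T} + (λ_j/(1+λ_j δ_j))·T)^{-1}) (for λ_j = 0 set δ_j arbitrarily; the corresponding terms vanish). Then Σ_{j=1}^{N_R} ρ̄(λ_j, T, N_S, δ_j) ≥ ((N_S − min{K, rank(F F^H)})/N_S) · Σ_{j=1}^{N_R} log det(I_{N_T} + λ_j·T), where ρ̄(λ,T,N_S,δ) = log det(I_{N_T} + (λ/(1+λδ))T)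 + N_S·log(1+λδ) − N_S·λδ/(1+λδ). -/
open Matrix
open scoped ComplexOrder

lemma psd_spectral_data {N : ℕ} {T : Matrix (Fin N) (Fin N) ℂ} (hT : T.PosSemidef) :
    ∃ t : Fin N → ℝ, (∀ i, 0 ≤ t i) ∧
      Fintype.card {i // t i ≠ 0} = T.rank ∧
      (∀ ρ : ℝ, (1 + (ρ : ℂ) • T).det = ((∏ i, (1 + ρ * t i) : ℝ) : ℂ)) ∧
      (∀ c : ℝ, 0 ≤ c →
        (T * (1 + (c : ℂ) • T)⁻¹).trace = ((∑ i, t i / (1 + c * t i) : ℝ) : ℂ)) := by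
  have hH := hT.isHermitian
  set U : Matrix (Fin N) (Fin N) ℂ := (hH.eigenvectorUnitary : Matrix (Fin N) (Fin N) ℂ)
  have hUU : U * star U = 1 := (Matrix.mem_unitaryGroup_iff).mp hH.eigenvectorUnitary.2
  have hUU' : star U * U = 1 := (Matrix.mem_unitaryGroup_iff').mp hH.eigenvectorUnitary.2
  have hUUm : ∀ M : Matrix (Fin N) (Fin N) ℂ, star U * (U * M) = M := by
    intro M; rw [← Matrix.mul_assoc, hUU', Matrix.one_mul]
  set t := hH.eigenvalues with ht
  have hspec : T = U * diagonal (fun i => (t i : ℂ)) * star U := hH.spectral_theorem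
  have hconj : ∀ d : Fin N → ℂ, ∀ ρ : ℂ,
      1 + ρ • (U * diagonal d * star U) = U * diagonal (fun i => 1 + ρ * d i) * star U := by
    intro d ρ
    have h1 : (diagonal (fun i => 1 + ρ * d i) : Matrix (Fin N) (Fin N) ℂ)
        = 1 + ρ • diagonal d := by
      rw [← diagonal_one, ← diagonal_smul, ← diagonal_add]; rfl
    rw [h1, Matrix.mul_add, Matrix.add_mul, Matrix.mul_one, hUU, Matrix.mul_smul,
      Matrix.smul_mul]
  refine ⟨t, fun i => hT.eigenvalues_nonneg i, ?_, ?_, ?_⟩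
  · exact (hH.rank_eq_card_non_zero_eigs).symm
  · intro ρ
    rw [hspec, hconj, Matrix.det_mul, Matrix.det_mul, mul_comm (U.det), mul_assoc,
      ← Matrix.det_mul, hUU, Matrix.det_one, mul_one, Matrix.det_diagonal]
    push_cast
    ring_nf
  · intro c hc
    have hpos : ∀ i, (0:ℝ) < 1 + c * t i := fun i =>
      lt_of_lt_of_le one_pos (le_add_of_nonneg_right (mul_nonneg hc (hT.eigenvalues_nonneg i)))
    have hne : ∀ i, (1 + (c:ℂ) * (t i : ℂ)) ≠ 0 := by
      intro i
      have : ((1 + c * t i : ℝ) : ℂ) ≠ 0 := by exact_mod_cast (hpos i).ne'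
      simpa [Complex.ofReal_add, Complex.ofReal_mul] using this
    set g : Fin N → ℂ := fun i => (1 + (c:ℂ) * (t i : ℂ))⁻¹ with hg
    have hdd : (diagonal (fun i => 1 + (c:ℂ) * (t i : ℂ))) * diagonal g = 1 := by
      rw [diagonal_mul_diagonal]
      have : (fun i => (1 + (c:ℂ) * (t i : ℂ)) * g i) = fun _ => 1 := by
        funext i; exact mul_inv_cancel₀ (hne i)
      rw [this, diagonal_one]
    have hinv : (1 + (c:ℂ) • T)⁻¹ = U * diagonal g * star U := by
      apply Matrix.inv_eq_right_inv
      rw [hspec, hconj]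
      simp only [Matrix.mul_assoc]
      rw [hUUm (diagonal g * star U), ← Matrix.mul_assoc (diagonal _), hdd, Matrix.one_mul, hUU]
    rw [hinv, hspec]
    simp only [Matrix.mul_assoc]
    rw [hUUm (diagonal g * star U), ← Matrix.mul_assoc (diagonal _), diagonal_mul_diagonal,
      ← Matrix.mul_assoc, Matrix.trace_mul_cycle, hUU', Matrix.one_mul, Matrix.trace_diagonal]
    push_cast
    refine Finset.sum_congr rfl fun i _ => ?_
    rw [div_eq_mul_inv]


lemma one_sub_inv_le_log {x : ℝ} (hx : 0 < x) : 1 - x⁻¹ ≤ Real.log x := by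
  have h := Real.log_le_sub_one_of_pos (inv_pos.mpr hx)
  rw [Real.log_inv] at h
  linarith

lemma scalar_core {n : ℕ} (NS m : ℕ) (t : Fin n → ℝ) (ht : ∀ i, 0 ≤ t i)
    (hr : Fintype.card {i // t i ≠ 0} ≤ m) (hm : m ≤ NS) (hNS : 1 ≤ NS)
    {lam δ : ℝ} (hlam : 0 < lam) (hδ : 0 ≤ δ)
    (hfp : (NS : ℝ) * δ = ∑ i, t i / (1 + lam / (1 + lam * δ) * t i)) :
    Real.log (∏ i, (1 + lam / (1 + lam * δ) * t i))
        + (NS : ℝ) * Real.log (1 + lam * δ) - (NS : ℝ) * (lam * δ / (1 + lam * δ))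
      ≥ (((NS : ℝ) - m) / NS) * Real.log (∏ i, (1 + lam * t i)) := by
  set u : ℝ := 1 + lam * δ with hu_def
  have hu1 : 1 ≤ u := le_add_of_nonneg_right (mul_nonneg hlam.le hδ)
  have hu0 : 0 < u := lt_of_lt_of_le one_pos hu1
  set c : ℝ := lam / u with hc_def
  have hc0 : 0 < c := div_pos hlam hu0
  have hct : ∀ i, 0 < 1 + c * t i := fun i =>
    lt_of_lt_of_le one_pos (le_add_of_nonneg_right (mul_nonneg hc0.le (ht i)))
  have hat : ∀ i, 0 < 1 + lam * t i := fun i =>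
    lt_of_lt_of_le one_pos (le_add_of_nonneg_right (mul_nonneg hlam.le (ht i)))
  have hlog1 : Real.log (∏ i, (1 + c * t i)) = ∑ i, Real.log (1 + c * t i) :=
    Real.log_prod fun i _ => (hct i).ne'
  have hlog2 : Real.log (∏ i, (1 + lam * t i)) = ∑ i, Real.log (1 + lam * t i) :=
    Real.log_prod fun i _ => (hat i).ne'
  set L : ℝ := ∑ i, Real.log (1 + lam * t i) with hL
  set S : Finset (Fin n) := Finset.univ.filter (fun i => t i ≠ 0) with hS
  have hrS : S.card ≤ m := by
    rw [hS, ← Fintype.card_subtype]; exact hr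
  have hden : ∀ i, 0 < u + lam * t i := fun i =>
    lt_of_lt_of_le hu0 (le_add_of_nonneg_right (mul_nonneg hlam.le (ht i)))
  have hsplit : ∀ i, 1 + c * t i = (u + lam * t i) / u := by
    intro i; field_simp [hc_def]
    rw [hc_def, add_mul, one_mul, div_mul_eq_mul_div, div_mul_cancel₀ _ hu0.ne']; ring
  -- fixed point rewritten: NS * (u - 1) / u = Σ lam * t i / (u + lam * t i)
  have hfp2 : (NS : ℝ) * ((u - 1) / u) = ∑ i, lam * t i / (u + lam * t i) := by
    have h1 : ∀ i, t i / (1 + c * t i) = u * (t i / (u + lam * t i)) := by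
      intro i
      rw [hsplit i, div_div_eq_mul_div, mul_comm (t i) u, mul_div_assoc]
    rw [Finset.sum_congr rfl (fun i _ => h1 i), ← Finset.mul_sum] at hfp
    have hu' : u - 1 = lam * δ := by rw [hu_def]; ring
    have h2 : (NS : ℝ) * ((u - 1) / u) = (lam / u) * ((NS:ℝ) * δ) := by
      rw [hu']; ring
    rw [h2, hfp, ← mul_assoc, div_mul_cancel₀ _ hu0.ne', Finset.mul_sum]
    exact Finset.sum_congr rfl fun i _ => (mul_div_assoc _ _ _).symm
  -- each summand of fixed point RHS is ≤ log(1 + lam * t i)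
  have hkey : ∀ i, lam * t i / (u + lam * t i) ≤ Real.log (1 + lam * t i) := by
    intro i
    have h1 : lam * t i / (u + lam * t i) ≤ lam * t i / (1 + lam * t i) := by
      apply div_le_div_of_nonneg_left (mul_nonneg hlam.le (ht i)) (hat i)
      linarith
    have h2 : lam * t i / (1 + lam * t i) = 1 - (1 + lam * t i)⁻¹ := by
      rw [eq_sub_iff_add_eq, inv_eq_one_div, ← add_div, add_comm (lam * t i) 1,
        div_self (hat i).ne']
    have h3 := one_sub_inv_le_log (hat i)
    linarith [h1, h3]
  have hfpL : (NS : ℝ) * ((u - 1) / u) ≤ L := by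
    rw [hfp2, hL]; exact Finset.sum_le_sum fun i _ => hkey i
  -- per-term lower bound on log(1 + c t i)
  have hlb : ∀ i, Real.log (1 + lam * t i) - (if i ∈ S then Real.log u else 0)
      ≤ Real.log (1 + c * t i) := by
    intro i
    by_cases hi : t i = 0
    · simp [hi, hS]
    · have hiS : i ∈ S := by simp [hS, hi]
      rw [if_pos hiS, hsplit i, Real.log_div (hden i).ne' hu0.ne']
      have : Real.log (1 + lam * t i) ≤ Real.log (u + lam * t i) :=
        Real.log_le_log (hat i) (by linarith)
      linarith
  have hsum_lb : L - (S.card : ℝ) * Real.log u ≤ ∑ i, Real.log (1 + c * t i) := by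
    have := Finset.sum_le_sum (fun i (_ : i ∈ Finset.univ) => hlb i)
    rw [Finset.sum_sub_distrib, Finset.sum_ite_mem, Finset.univ_inter,
      Finset.sum_const, nsmul_eq_mul] at this
    rw [hL]
    exact this
  -- remaining scalar inequalities
  have hlogu : (u - 1) / u ≤ Real.log u := by
    have := one_sub_inv_le_log hu0
    have : 1 - u⁻¹ = (u - 1) / u := by field_simp
    linarith [one_sub_inv_le_log hu0, this]
  have hlogu0 : 0 ≤ Real.log u := Real.log_nonneg hu1
  have hL0 : 0 ≤ L := hL ▸ Finset.sum_nonneg fun i _ =>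
    Real.log_nonneg (by linarith [mul_nonneg hlam.le (ht i)])
  have hNS0 : (0:ℝ) < NS := by exact_mod_cast Nat.pos_of_ne_zero (by omega)
  have hmNS : (m : ℝ) ≤ NS := by exact_mod_cast hm
  have hrm : (S.card : ℝ) ≤ m := by exact_mod_cast hrS
  have hq0 : 0 ≤ (u - 1) / u := div_nonneg (by linarith) hu0.le
  -- final assembly
  rw [hlog1, hlog2]
  rw [ge_iff_le, div_mul_eq_mul_div, div_le_iff₀ hNS0]
  -- goal : (NS - m) * L ≤ (Σ log(1+c t) + NS log u - NS*(lam δ/u)) * NS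
  have hld : lam * δ / u = (u - 1) / u := by rw [hu_def]; ring_nf
  rw [hld]
  have e1 : L - (S.card : ℝ) * Real.log u ≤ ∑ i, Real.log (1 + c * t i) := hsum_lb
  -- (NS - S.card) * (log u - (u-1)/u) ≥ 0
  have e2 : (0:ℝ) ≤ ((NS:ℝ) - S.card) * (Real.log u - (u - 1) / u) :=
    mul_nonneg (by linarith) (by linarith)
  -- m * L ≥ m * NS * ((u-1)/u)  and  S.card*(u-1)/u ≤ m*(u-1)/u
  have e3 : (S.card : ℝ) * ((u - 1)/u) * NS ≤ (m : ℝ) * L := by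
    have : (S.card : ℝ) * ((u - 1)/u) * NS ≤ (m:ℝ) * (((NS:ℝ)) * ((u-1)/u)) := by
      have := mul_le_mul_of_nonneg_right hrm (mul_nonneg hq0 hNS0.le)
      nlinarith
    exact this.trans (mul_le_mul_of_nonneg_left hfpL (by positivity))
  nlinarith [e1, e2, e3, mul_le_mul_of_nonneg_right e1 hNS0.le]


/-- **Proposition 2 of the paper**: the closed-form sensing mutual information with random
signals is at least `((N_S − min{K, rank(FFᴴ)})/N_S)` times the deterministic-signal upper
bound `Σ_j log det(I + λ_j T)`, where `T = R_T^{1/2} F Fᴴ R_T^{1/2}`. -/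
theorem smi_lower_bound {NT K NR NS : ℕ}
    (RT Rhalf : Matrix (Fin NT) (Fin NT) ℂ)
    (hRT : RT.PosSemidef) (hRhalf : Rhalf.PosSemidef) (hsq : Rhalf * Rhalf = RT)
    (F : Matrix (Fin NT) (Fin K) ℂ)
    (l : Fin NR → ℝ) (hl : ∀ j, 0 ≤ l j)
    (hNS1 : 1 ≤ NS) (hNSK : K ≤ NS)
    (δ : Fin NR → ℝ)
    (hδ : ∀ j, 0 < l j →
      0 ≤ δ j ∧ FixedPointEq (Rhalf * F * Fᴴ * Rhalf) (l j) NS (δ j)) :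
    ∑ j : Fin NR, rhoBar (l j) (Rhalf * F * Fᴴ * Rhalf) NS (δ j) ≥
      (((NS : ℝ) - (min K (F * Fᴴ).rank : ℕ)) / (NS : ℝ)) *
        ∑ j : Fin NR,
          Real.log ((1 + ((l j : ℝ) : ℂ) • (Rhalf * F * Fᴴ * Rhalf)).det.re) := by
  set T : Matrix (Fin NT) (Fin NT) ℂ := Rhalf * F * Fᴴ * Rhalf with hTdef
  have hT : T.PosSemidef := by
    have h1 : T = (Rhalf * F) * (Rhalf * F)ᴴ := by
      rw [conjTranspose_mul, hRhalf.isHermitian.eq, hTdef, Matrix.mul_assoc]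
    rw [h1]
    exact Matrix.posSemidef_self_mul_conjTranspose _
  set m : ℕ := min K (F * Fᴴ).rank with hm_def
  have hrank : T.rank ≤ m := by
    have h1 : T = (Rhalf * (F * Fᴴ)) * Rhalf := by
      simp only [hTdef, Matrix.mul_assoc]
    have h2 : T.rank ≤ (F * Fᴴ).rank := by
      rw [h1]
      exact (Matrix.rank_mul_le_left _ _).trans (Matrix.rank_mul_le_right _ _)
    have h3 : T.rank ≤ K := by
      refine h2.trans ?_
      exact (Matrix.rank_mul_le_left F Fᴴ).trans (Matrix.rank_le_width F)
    exact le_min h3 h2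
  have hmNS : m ≤ NS := le_trans (min_le_left _ _) hNSK
  obtain ⟨t, ht0, hcard, hdet, htrace⟩ := psd_spectral_data hT
  -- termwise inequality
  rw [ge_iff_le, Finset.mul_sum]
  apply Finset.sum_le_sum
  intro j _
  have hdetre : ∀ ρ : ℝ, (1 + (ρ : ℂ) • T).det.re = ∏ i, (1 + ρ * t i) := by
    intro ρ; rw [hdet ρ, Complex.ofReal_re]
  rcases eq_or_lt_of_le (hl j) with h0 | hpos
  · -- l j = 0
    have hlj : l j = 0 := h0.symm
    simp only [rhoBar, hlj]
    have h1 : (0:ℝ) / (1 + 0 * δ j) = 0 := by norm_num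
    rw [h1, hdetre 0]
    have h2 : ∏ i, (1 + (0:ℝ) * t i) = 1 := by simp
    rw [h2]
    norm_num
  · -- l j > 0
    obtain ⟨hδ0, hfp⟩ := hδ j hpos
    set lam := l j
    set d := δ j
    have hc0 : 0 ≤ lam / (1 + lam * d) :=
      div_nonneg hpos.le (by positivity)
    have hfpR : (NS : ℝ) * d = ∑ i, t i / (1 + lam / (1 + lam * d) * t i) := by
      have hNSne : (NS : ℂ) ≠ 0 := by
        exact_mod_cast (Nat.cast_ne_zero (R := ℂ)).mpr (by omega)
      rw [FixedPointEq, htrace _ hc0, inv_mul_eq_div, eq_div_iff hNSne] at hfp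
      have : (((NS : ℝ) * d : ℝ) : ℂ)
          = ((∑ i, t i / (1 + lam / (1 + lam * d) * t i) : ℝ) : ℂ) := by
        rw [← hfp]; push_cast; ring
      exact_mod_cast this
    have := scalar_core NS m t ht0 (le_of_eq_of_le hcard hrank) hmNS hNS1 hpos hδ0 hfpR
    simp only [rhoBar]
    rw [hdetre, hdetre]
    exact this
end

section
/- Let T ∈ ℂ^{N_T×N_T} be Hermitian positive semidefinite, let λ > 0, let I ⊆ (0,∞) be an open interval, and let δ : I → ℝ be a differentiable function with δ(s) ≥ 0 for all s ∈ I such that δ(s) = (1/s)·tr(T·(I_{N_T} + (λ/(1+λδ(s)))·T)^{-1}) holds for every s ∈ I. Define g : I → ℝ by g(s) = log det(I_{N_T} + (λ/(1+λδ(s)))·T) + s·log(1+λδ(s)) − s·λδ(s)/(1+λδ(s)). Then g is differentiable on I with g'(s) = log(1+λδ(s)) − λδ(s)/(1+λδ(s)) ≥ 0 for all s ∈ I; in particular g is monotonically nondecreasing on I. -/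
open Matrix
open scoped ComplexOrder

section aux
variable {n : ℕ}

lemma conj_one_add_smul (T : Matrix (Fin n) (Fin n) ℂ) (hT : T.IsHermitian) (x : ℝ) :
    1 + ((x : ℝ) : ℂ) • T =
      (hT.eigenvectorUnitary : Matrix (Fin n) (Fin n) ℂ) *
        diagonal (fun i => ((1 + x * hT.eigenvalues i : ℝ) : ℂ)) *
        star (hT.eigenvectorUnitary : Matrix (Fin n) (Fin n) ℂ) := by
  set V := (hT.eigenvectorUnitary : Matrix (Fin n) (Fin n) ℂ) with hV
  have hVVs : V * star V = 1 := (Matrix.mem_unitaryGroup_iff).mp hT.eigenvectorUnitary.2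
  have hdiag : diagonal (fun i => ((1 + x * hT.eigenvalues i : ℝ) : ℂ)) =
      1 + (x : ℂ) • diagonal (RCLike.ofReal ∘ hT.eigenvalues) := by
    ext i j
    rcases eq_or_ne i j with h | h
    · subst h
      simp only [diagonal_apply_eq, Matrix.add_apply, Matrix.smul_apply, Matrix.one_apply_eq,
        Function.comp_apply, RCLike.ofReal_alg]
      push_cast
      simp [smul_eq_mul]
    · simp [diagonal_apply_ne _ h, Matrix.one_apply_ne h]
  rw [hdiag, mul_add, add_mul, mul_one, hVVs, mul_smul_comm, smul_mul_assoc]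
  exact congrArg (fun M => (1:Matrix (Fin n) (Fin n) ℂ) + ((x:ℝ):ℂ) • M) hT.spectral_theorem

lemma det_one_add_smul_s12 (T : Matrix (Fin n) (Fin n) ℂ) (hT : T.IsHermitian) (x : ℝ) :
    (1 + ((x : ℝ) : ℂ) • T).det.re = ∏ i, (1 + x * hT.eigenvalues i) := by
  rw [conj_one_add_smul T hT x, det_mul_right_comm,
    (Matrix.mem_unitaryGroup_iff).mp hT.eigenvectorUnitary.2, one_mul, det_diagonal]
  rw [← Complex.ofReal_prod]
  exact Complex.ofReal_re _

lemma trace_mul_inv_eq (T : Matrix (Fin n) (Fin n) ℂ) (hT : T.IsHermitian) (x : ℝ)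
    (hx : ∀ i, (1 + x * hT.eigenvalues i : ℝ) ≠ 0) :
    (T * (1 + ((x : ℝ) : ℂ) • T)⁻¹).trace =
      ∑ i, ((hT.eigenvalues i / (1 + x * hT.eigenvalues i) : ℝ) : ℂ) := by
  set V := (hT.eigenvectorUnitary : Matrix (Fin n) (Fin n) ℂ) with hVdef
  have hVVs : V * star V = 1 := (Matrix.mem_unitaryGroup_iff).mp hT.eigenvectorUnitary.2
  have hVsV : star V * V = 1 := (Matrix.mem_unitaryGroup_iff').mp hT.eigenvectorUnitary.2
  set f : Fin n → ℂ := fun i => ((1 + x * hT.eigenvalues i : ℝ) : ℂ) with hf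
  have hfne : ∀ i, f i ≠ 0 := fun i => by
    simpa [hf] using Complex.ofReal_ne_zero.mpr (hx i)
  have hinv : (1 + ((x : ℝ) : ℂ) • T)⁻¹ = V * diagonal (fun i => (f i)⁻¹) * star V := by
    apply inv_eq_right_inv
    rw [conj_one_add_smul T hT x]
    calc V * diagonal f * star V * (V * diagonal (fun i => (f i)⁻¹) * star V)
        = V * (diagonal f * (star V * V) * diagonal (fun i => (f i)⁻¹)) * star V := by
          noncomm_ring
      _ = 1 := by
          rw [hVsV, mul_one, diagonal_mul_diagonal]
          have : (fun i => f i * (f i)⁻¹) = fun _ => (1:ℂ) := by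
            funext i; exact mul_inv_cancel₀ (hfne i)
          rw [this, diagonal_one, mul_one, hVVs]
  rw [hinv]
  conv_lhs => rw [hT.spectral_theorem, Unitary.conjStarAlgAut_apply]
  have : (V * diagonal (RCLike.ofReal ∘ hT.eigenvalues) * star V) *
      (V * diagonal (fun i => (f i)⁻¹) * star V)
      = V * (diagonal (RCLike.ofReal ∘ hT.eigenvalues) * (star V * V) *
          diagonal (fun i => (f i)⁻¹)) * star V := by noncomm_ring
  rw [this, hVsV, mul_one, diagonal_mul_diagonal, trace_mul_cycle, hVsV, one_mul,
    trace_diagonal]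
  congr 1
  funext i
  rw [div_eq_mul_inv]
  push_cast
  simp [hf, Function.comp]

end aux

/-- **Monotonicity of the sensing mutual information in the number of frames**
(computation (9)–(10) of the paper): with `δ(s)` the fixed-point solution and
`g(s) = ρ̄(λ,T,s,δ(s))`, one has `g'(s) = log(1+λδ(s)) − λδ(s)/(1+λδ(s)) ≥ 0`. -/
theorem rhoBar_monotone_in_frames {NT : ℕ} (T : Matrix (Fin NT) (Fin NT) ℂ)
    (hT : T.PosSemidef) (lam : ℝ) (hlam : 0 < lam)
    (a b : ℝ) (hab : Set.Ioo a b ⊆ Set.Ioi (0 : ℝ))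
    (δ : ℝ → ℝ)
    (hdiff : ∀ s ∈ Set.Ioo a b, DifferentiableAt ℝ δ s)
    (hpos : ∀ s ∈ Set.Ioo a b, 0 ≤ δ s)
    (hfix : ∀ s ∈ Set.Ioo a b,
      ((δ s : ℝ) : ℂ) =
        (s : ℂ)⁻¹ * (T * (1 + ((lam / (1 + lam * δ s) : ℝ) : ℂ) • T)⁻¹).trace) :
    (∀ s ∈ Set.Ioo a b,
      HasDerivAt
        (fun u : ℝ =>
          Real.log ((1 + ((lam / (1 + lam * δ u) : ℝ) : ℂ) • T).det.re)
            + u * Real.log (1 + lam * δ u) - u * (lam * δ u / (1 + lam * δ u)))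
        (Real.log (1 + lam * δ s) - lam * δ s / (1 + lam * δ s)) s ∧
      0 ≤ Real.log (1 + lam * δ s) - lam * δ s / (1 + lam * δ s)) ∧
    MonotoneOn
      (fun u : ℝ =>
        Real.log ((1 + ((lam / (1 + lam * δ u) : ℝ) : ℂ) • T).det.re)
          + u * Real.log (1 + lam * δ u) - u * (lam * δ u / (1 + lam * δ u)))
      (Set.Ioo a b) := by
  classical
  set μ : Fin NT → ℝ := hT.1.eigenvalues with hμdef
  have hμ : ∀ i, 0 ≤ μ i := fun i => hT.eigenvalues_nonneg i
  -- rewrite det.re as a real product, globally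
  have hdet : ∀ u : ℝ,
      (1 + ((lam / (1 + lam * δ u) : ℝ) : ℂ) • T).det.re
        = ∏ i, (1 + lam / (1 + lam * δ u) * μ i) := fun u =>
    det_one_add_smul_s12 T hT.1 (lam / (1 + lam * δ u))
  have key : ∀ s ∈ Set.Ioo a b,
      HasDerivAt
        (fun u : ℝ =>
          Real.log ((1 + ((lam / (1 + lam * δ u) : ℝ) : ℂ) • T).det.re)
            + u * Real.log (1 + lam * δ u) - u * (lam * δ u / (1 + lam * δ u)))
        (Real.log (1 + lam * δ s) - lam * δ s / (1 + lam * δ s)) s := by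
    intro s hs
    have hs0 : 0 < s := hab hs
    have hden : 0 < 1 + lam * δ s := by nlinarith [hpos s hs]
    set d : ℝ := deriv δ s with hddef
    have hd : HasDerivAt δ d s := (hdiff s hs).hasDerivAt
    have hde : HasDerivAt (fun u => 1 + lam * δ u) (lam * d) s :=
      ((hd.const_mul lam).const_add 1)
    have hcd : HasDerivAt (fun u => lam / (1 + lam * δ u))
        ((0 * (1 + lam * δ s) - lam * (lam * d)) / (1 + lam * δ s) ^ 2) s :=
      (hasDerivAt_const s lam).div hde hden.ne'
    have hfac : ∀ i, 0 < 1 + lam / (1 + lam * δ s) * μ i := fun i => by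
      have : 0 ≤ lam / (1 + lam * δ s) * μ i :=
        mul_nonneg (div_nonneg hlam.le hden.le) (hμ i)
      linarith
    -- derivative of each log factor
    have h1 : HasDerivAt
        (fun u => ∑ i, Real.log (1 + lam / (1 + lam * δ u) * μ i))
        (∑ i, ((0 * (1 + lam * δ s) - lam * (lam * d)) / (1 + lam * δ s) ^ 2 * μ i)
            / (1 + lam / (1 + lam * δ s) * μ i)) s := by
      apply HasDerivAt.fun_sum
      intro i _
      exact ((hcd.mul_const (μ i)).const_add 1).log (hfac i).ne'
    have h2 : HasDerivAt (fun u : ℝ => u * Real.log (1 + lam * δ u))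
        (1 * Real.log (1 + lam * δ s) + s * (lam * d / (1 + lam * δ s))) s :=
      (hasDerivAt_id s).mul (hde.log hden.ne')
    have h3 : HasDerivAt (fun u : ℝ => u * (lam * δ u / (1 + lam * δ u)))
        (1 * (lam * δ s / (1 + lam * δ s)) +
          s * ((lam * d * (1 + lam * δ s) - lam * δ s * (lam * d)) / (1 + lam * δ s) ^ 2)) s :=
      (hasDerivAt_id s).mul ((hd.const_mul lam).div hde hden.ne')
    have hH : HasDerivAt
        (fun u : ℝ =>
          (∑ i, Real.log (1 + lam / (1 + lam * δ u) * μ i))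
            + u * Real.log (1 + lam * δ u) - u * (lam * δ u / (1 + lam * δ u)))
        ((∑ i, ((0 * (1 + lam * δ s) - lam * (lam * d)) / (1 + lam * δ s) ^ 2 * μ i)
            / (1 + lam / (1 + lam * δ s) * μ i))
          + (1 * Real.log (1 + lam * δ s) + s * (lam * d / (1 + lam * δ s)))
          - (1 * (lam * δ s / (1 + lam * δ s)) +
            s * ((lam * d * (1 + lam * δ s) - lam * δ s * (lam * d)) /
              (1 + lam * δ s) ^ 2))) s :=
      (h1.add h2).sub h3
    -- fixed point identity in real form
    have hsum : s * δ s = ∑ i, μ i / (1 + lam / (1 + lam * δ s) * μ i) := by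
      have hfx := hfix s hs
      rw [trace_mul_inv_eq T hT.1 _ (fun i => (hfac i).ne')] at hfx
      have hs' : (s : ℂ) ≠ 0 := Complex.ofReal_ne_zero.mpr hs0.ne'
      rw [← Complex.ofReal_sum] at hfx
      have h4 := congrArg (fun z => (s : ℂ) * z) hfx
      rw [← mul_assoc, mul_inv_cancel₀ hs', one_mul] at h4
      exact_mod_cast h4
    -- the derivative value simplifies
    have hDeq :
        ((∑ i, ((0 * (1 + lam * δ s) - lam * (lam * d)) / (1 + lam * δ s) ^ 2 * μ i)
            / (1 + lam / (1 + lam * δ s) * μ i))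
          + (1 * Real.log (1 + lam * δ s) + s * (lam * d / (1 + lam * δ s)))
          - (1 * (lam * δ s / (1 + lam * δ s)) +
            s * ((lam * d * (1 + lam * δ s) - lam * δ s * (lam * d)) /
              (1 + lam * δ s) ^ 2)))
        = Real.log (1 + lam * δ s) - lam * δ s / (1 + lam * δ s) := by
      have hrw : (∑ i, ((0 * (1 + lam * δ s) - lam * (lam * d)) / (1 + lam * δ s) ^ 2 * μ i)
            / (1 + lam / (1 + lam * δ s) * μ i))
          = ((0 * (1 + lam * δ s) - lam * (lam * d)) / (1 + lam * δ s) ^ 2) * (s * δ s) := by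
        rw [hsum, Finset.mul_sum]
        exact Finset.sum_congr rfl fun i _ => (mul_div_assoc _ _ _)
      rw [hrw]
      have hne : (1 + lam * δ s) ≠ 0 := hden.ne'
      field_simp
      ring
    -- transfer back to the original function
    have hev : ∀ᶠ u in nhds s, 0 < 1 + lam * δ u := by
      have hcont : ContinuousAt (fun u => 1 + lam * δ u) s := hde.continuousAt
      exact hcont.eventually (eventually_gt_nhds hden)
    have heq : (fun u : ℝ =>
          Real.log ((1 + ((lam / (1 + lam * δ u) : ℝ) : ℂ) • T).det.re)
            + u * Real.log (1 + lam * δ u) - u * (lam * δ u / (1 + lam * δ u)))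
        =ᶠ[nhds s] (fun u : ℝ =>
          (∑ i, Real.log (1 + lam / (1 + lam * δ u) * μ i))
            + u * Real.log (1 + lam * δ u) - u * (lam * δ u / (1 + lam * δ u))) := by
      filter_upwards [hev] with u hu
      have hfacu : ∀ i, 0 < 1 + lam / (1 + lam * δ u) * μ i := fun i => by
        have : 0 ≤ lam / (1 + lam * δ u) * μ i :=
          mul_nonneg (div_nonneg hlam.le hu.le) (hμ i)
        linarith
      rw [hdet u, Real.log_prod (fun i _ => (hfacu i).ne')]
    exact hDeq ▸ (hH.congr_of_eventuallyEq heq)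
  have hnn : ∀ s ∈ Set.Ioo a b,
      0 ≤ Real.log (1 + lam * δ s) - lam * δ s / (1 + lam * δ s) := by
    intro s hs
    have hx : 0 ≤ lam * δ s := mul_nonneg hlam.le (hpos s hs)
    have h1x : (0:ℝ) < 1 + lam * δ s := by linarith
    have hy : (0:ℝ) < (1 + lam * δ s)⁻¹ := by positivity
    have h := Real.log_le_sub_one_of_pos hy
    rw [Real.log_inv] at h
    have hfr : lam * δ s / (1 + lam * δ s) = 1 - (1 + lam * δ s)⁻¹ := by
      field_simp
      ring
    rw [hfr]
    linarith
  refine ⟨fun s hs => ⟨key s hs, hnn s hs⟩, ?_⟩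
  apply monotoneOn_of_deriv_nonneg (convex_Ioo a b)
  · intro x hx
    exact ((key x hx).differentiableAt.continuousAt).continuousWithinAt
  · intro x hx
    rw [interior_Ioo] at hx
    exact (key x hx).differentiableAt.differentiableWithinAt
  · intro x hx
    rw [interior_Ioo] at hx
    rw [(key x hx).deriv]
    exact hnn x hx
end

section
/- Let R ∈ ℂ^{N_T×N_T} be Hermitian positive semidefinite with positive semidefinite square root R^{1/2}, let ρ > 0, let K and N_S be positive integers, and for F ∈ ℂ^{N_T×K} set T(F) = R^{1/2} F F^H R^{1/2}. Let F₀ ∈ ℂ^{N_T×K} and suppose δ : ℂ^{N_T×K} → ℝ (with ℂ^{N_T×K} viewed as a real vector space) is Fréchet differentiable at F₀, takes nonnegative values, and satisfies δ(F) = (1/N_S)·tr(T(F)·(I_{N_T} + (ρ/(1+ρδ(F)))·T(F))^{-1}) for all F in a neighborhood of F₀. Set α = ρ/(1+ρδ(F₀)), T = T(F₀), M = (I_{N_T} + α·T)^{-1}, and assume N_S > rank(T) or more generally d := N_S − α²·tr((T M)²) ≠ 0 (note tr((TM)²) is real since TM is Hermitian). Then for every direction E ∈ ℂ^{N_T×K},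 the derivative of δ at F₀ in direction E equals Dδ(F₀)[E] = 2·Re tr(E^H · G), where G = (1/d)·R^{1/2} M² R^{1/2} F₀. Equivalently, the conjugate (Wirtinger) gradient of δ with respect to F is R^{1/2}(I + αT)^{-2}R^{1/2}F₀ / (N_S − α²·tr((T(I+αT)^{-1})²)). -/
open Matrix
open scoped ComplexOrder Matrix.Norms.L2Operator

/-- **Proposition 3 of the paper**: the (Wirtinger) gradient of the implicitly defined
fixed-point solution `δ(F)` with respect to the precoder `F`. If `δ` is Fréchet
differentiable at `F₀` (over ℝ) and satisfies the fixed-point equation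
`δ(F) = (1/N_S)·tr(T(F)(I + (ρ/(1+ρδ(F)))T(F))⁻¹)` near `F₀`, with
`T(F) = R^{1/2} F Fᴴ R^{1/2}`, then for every direction `E`
`Dδ(F₀)[E] = 2·Re tr(Eᴴ G)` with `G = (1/d)·R^{1/2} M² R^{1/2} F₀`,
`M = (I + αT)⁻¹`, `α = ρ/(1+ρδ(F₀))` and `d = N_S − α²·tr((TM)²)`. -/
theorem fixedPoint_gradient {NT K : ℕ}
    (R Rhalf : Matrix (Fin NT) (Fin NT) ℂ)
    (hR : R.PosSemidef) (hRhalf : Rhalf.PosSemidef) (hsq : Rhalf * Rhalf = R)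
    (ρ : ℝ) (hρ : 0 < ρ) (NS : ℕ) (hNS : 1 ≤ NS)
    (δ : Matrix (Fin NT) (Fin K) ℂ → ℝ) (hpos : ∀ F, 0 ≤ δ F)
    (F₀ : Matrix (Fin NT) (Fin K) ℂ)
    (D : Matrix (Fin NT) (Fin K) ℂ →L[ℝ] ℝ) (hD : HasFDerivAt δ D F₀)
    (hfix : ∀ᶠ F in nhds F₀,
      ((δ F : ℝ) : ℂ) = (NS : ℂ)⁻¹ *
        ((Rhalf * F * Fᴴ * Rhalf) *
          (1 + ((ρ / (1 + ρ * δ F) : ℝ) : ℂ) • (Rhalf * F * Fᴴ * Rhalf))⁻¹).trace)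
    (α : ℝ) (hα : α = ρ / (1 + ρ * δ F₀))
    (T Mm : Matrix (Fin NT) (Fin NT) ℂ)
    (hTdef : T = Rhalf * F₀ * F₀ᴴ * Rhalf)
    (hMdef : Mm = (1 + ((α : ℝ) : ℂ) • T)⁻¹)
    (d : ℝ) (hd : d = (NS : ℝ) - α ^ 2 * (((T * Mm) * (T * Mm)).trace).re)
    (hd0 : d ≠ 0) :
    ∀ E : Matrix (Fin NT) (Fin K) ℂ,
      D E = 2 * ((Eᴴ * (((d⁻¹ : ℝ) : ℂ) • (Rhalf * (Mm * Mm) * Rhalf * F₀))).trace).re := by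
  intro E
  have hδ0 : 0 ≤ δ F₀ := hpos F₀
  have hden : (0:ℝ) < 1 + ρ * δ F₀ := by nlinarith
  have hα0 : 0 < α := by rw [hα]; positivity
  have hRh : Rhalfᴴ = Rhalf := hRhalf.isHermitian
  -- T is positive semidefinite
  have hTpsd : T.PosSemidef := by
    have h1 : T = (Rhalf * F₀) * (Rhalf * F₀)ᴴ := by
      rw [conjTranspose_mul, hRh, hTdef, Matrix.mul_assoc, Matrix.mul_assoc]
    rw [h1]; exact posSemidef_self_mul_conjTranspose _
  have hsPSD : (((α:ℝ):ℂ) • T).PosSemidef := by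
    constructor
    · show _ᴴ = _
      rw [conjTranspose_smul, hTpsd.isHermitian.eq]
      norm_num
    · intro x
      exact (hTpsd.smul (a := ((α:ℝ):ℂ)) (by exact_mod_cast hα0.le)).2 x
  have hNpd : (1 + ((α:ℝ):ℂ) • T).PosDef := Matrix.PosDef.add_posSemidef Matrix.PosDef.one hsPSD
  obtain ⟨u, hu⟩ := hNpd.isUnit
  have hdet : IsUnit (1 + ((α:ℝ):ℂ) • T).det := (isUnit_iff_isUnit_det _).mp hNpd.isUnit
  have hMm : (Mm : Matrix (Fin NT) (Fin NT) ℂ) = ↑u⁻¹ := by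
    rw [hMdef, Matrix.nonsing_inv_eq_ringInverse, ← hu, Ring.inverse_unit]
  have hMmH : Mmᴴ = Mm := by rw [hMdef]; exact hNpd.isHermitian.inv
  have hinv1 : Mm * (1 + ((α:ℝ):ℂ) • T) = 1 := by
    rw [hMdef]; exact Matrix.nonsing_inv_mul _ hdet
  -- abbreviations
  set B : Matrix (Fin NT) (Fin NT) ℂ :=
    Rhalf * E * F₀ᴴ * Rhalf + Rhalf * F₀ * Eᴴ * Rhalf with hB
  set C : Matrix (Fin NT) (Fin NT) ℂ := Rhalf * E * Eᴴ * Rhalf with hC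
  set Q : Matrix (Fin NT) (Fin K) ℂ := Rhalf * (Mm * Mm) * Rhalf * F₀ with hQ
  -- the line through F₀
  have h0L : F₀ + (0:ℝ) • E = F₀ := by simp
  have hL : HasDerivAt (fun t : ℝ => F₀ + t • E) E 0 := by
    simpa using ((hasDerivAt_id (0:ℝ)).smul_const E).const_add F₀
  have hf : HasDerivAt (fun t : ℝ => δ (F₀ + t • E)) (D E) 0 := by
    have := hD.comp_hasDerivAt_of_eq (0:ℝ) hL h0L.symm
    simpa [Function.comp_def] using this
  -- T along the line
  have hconj : ∀ t : ℝ, (F₀ + t • E)ᴴ = F₀ᴴ + t • Eᴴ := by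
    intro t; simp
  have hTexp : ∀ t : ℝ,
      Rhalf * (F₀ + t • E) * (F₀ + t • E)ᴴ * Rhalf = T + t • B + (t*t) • C := by
    intro t
    rw [hconj t, hTdef, hB, hC]
    simp only [Matrix.mul_add, Matrix.add_mul, Matrix.smul_mul, Matrix.mul_smul, smul_smul,
      smul_add, Matrix.mul_assoc]
    module
  have hTf : HasDerivAt (fun t : ℝ => T + t • B + (t*t) • C) B 0 := by
    have h1 : HasDerivAt (fun t : ℝ => T + t • B) B 0 := by
      simpa using ((hasDerivAt_id (0:ℝ)).smul_const B).const_add T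
    have h2 : HasDerivAt (fun t : ℝ => (t*t) • C) (0 : Matrix (Fin NT) (Fin NT) ℂ) 0 := by
      simpa using ((hasDerivAt_id (0:ℝ)).mul (hasDerivAt_id (0:ℝ))).smul_const C
    exact (h1.add h2).congr_deriv (add_zero B)
  have hT' : HasDerivAt (fun t : ℝ => Rhalf * (F₀ + t • E) * (F₀ + t • E)ᴴ * Rhalf) B 0 := by
    simp only [hTexp]; exact hTf
  -- the scalar coefficient along the line
  have hg : HasDerivAt (fun s : ℝ => 1 + ρ * s) ρ (δ F₀) := by
    simpa using ((hasDerivAt_id (δ F₀)).const_mul ρ).const_add 1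
  have hc : HasDerivAt (fun s : ℝ => ρ / (1 + ρ * s)) (-(α^2) * 1) (δ F₀) := by
    have h := (hasDerivAt_const (δ F₀) ρ).div hg hden.ne'
    refine h.congr_deriv ?_
    symm
    rw [hα]
    field_simp
    ring
  have hcf : HasDerivAt (fun t : ℝ => ρ / (1 + ρ * δ (F₀ + t • E))) (-(α^2) * D E) 0 := by
    have hc' : HasDerivAt (fun s : ℝ => ρ / (1 + ρ * s)) (-(α^2) * 1)
        (δ (F₀ + (0:ℝ) • E)) := by rw [h0L]; exact hc
    have h := hc'.comp (0:ℝ) hf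
    simpa [Function.comp_def, mul_assoc] using h
  have hcfC : HasDerivAt (fun t : ℝ => ((ρ / (1 + ρ * δ (F₀ + t • E)) : ℝ) : ℂ))
      (((-(α^2) * D E : ℝ) : ℂ)) 0 := by
    have h := Complex.ofRealCLM.hasFDerivAt.comp_hasDerivAt (0:ℝ) hcf
    simpa only [Function.comp_def, Complex.ofRealCLM_apply] using h
  -- N along the line and its inverse
  have hc0 : ((ρ / (1 + ρ * δ (F₀ + (0:ℝ) • E)) : ℝ) : ℂ) = ((α:ℝ):ℂ) := by
    rw [h0L, hα]
  have hT0 : Rhalf * (F₀ + (0:ℝ) • E) * (F₀ + (0:ℝ) • E)ᴴ * Rhalf = T := by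
    rw [h0L, hTdef]
  set N' : Matrix (Fin NT) (Fin NT) ℂ :=
    ((α:ℝ):ℂ) • B + ((-(α^2) * D E : ℝ) : ℂ) • T with hN'
  have hN : HasDerivAt (fun t : ℝ => 1 + ((ρ / (1 + ρ * δ (F₀ + t • E)) : ℝ) : ℂ) •
      (Rhalf * (F₀ + t • E) * (F₀ + t • E)ᴴ * Rhalf)) N' 0 := by
    have h := (hcfC.smul hT').const_add (1 : Matrix (Fin NT) (Fin NT) ℂ)
    rw [hc0, hT0] at h
    exact h
  have hN0 : (1 + ((ρ / (1 + ρ * δ (F₀ + (0:ℝ) • E)) : ℝ) : ℂ) •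
      (Rhalf * (F₀ + (0:ℝ) • E) * (F₀ + (0:ℝ) • E)ᴴ * Rhalf)) = (↑u : Matrix (Fin NT) (Fin NT) ℂ) := by
    rw [hc0, hT0, hu]
  have hNinv : HasDerivAt (fun t : ℝ => Ring.inverse (1 + ((ρ / (1 + ρ * δ (F₀ + t • E)) : ℝ) : ℂ) •
      (Rhalf * (F₀ + t • E) * (F₀ + t • E)ᴴ * Rhalf))) (-(Mm * N' * Mm)) 0 := by
    have h := (hasFDerivAt_ringInverse (𝕜 := ℝ) u).comp_hasDerivAt_of_eq (0:ℝ) hN hN0.symm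
    simpa [Function.comp_def, hMm] using h
  have hinvat0 : Ring.inverse (1 + ((ρ / (1 + ρ * δ (F₀ + (0:ℝ) • E)) : ℝ) : ℂ) •
      (Rhalf * (F₀ + (0:ℝ) • E) * (F₀ + (0:ℝ) • E)ᴴ * Rhalf)) = Mm := by
    rw [hN0, Ring.inverse_unit, hMm]
  -- trace function
  have hprod : HasDerivAt (fun t : ℝ => (Rhalf * (F₀ + t • E) * (F₀ + t • E)ᴴ * Rhalf) *
      Ring.inverse (1 + ((ρ / (1 + ρ * δ (F₀ + t • E)) : ℝ) : ℂ) •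
        (Rhalf * (F₀ + t • E) * (F₀ + t • E)ᴴ * Rhalf)))
      (B * Mm + T * -(Mm * N' * Mm)) 0 := by
    have h := hT'.mul hNinv
    rw [hinvat0, hT0] at h
    exact h
  have htr : HasDerivAt (fun t : ℝ => ((Rhalf * (F₀ + t • E) * (F₀ + t • E)ᴴ * Rhalf) *
      Ring.inverse (1 + ((ρ / (1 + ρ * δ (F₀ + t • E)) : ℝ) : ℂ) •
        (Rhalf * (F₀ + t • E) * (F₀ + t • E)ᴴ * Rhalf))).trace)
      ((B * Mm + T * -(Mm * N' * Mm)).trace) 0 := by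
    have h := ((((Matrix.traceLinearMap (Fin NT) ℂ ℂ).toContinuousLinearMap).restrictScalars
      ℝ).hasFDerivAt).comp_hasDerivAt (0:ℝ) hprod
    simpa only [Function.comp_def, ContinuousLinearMap.coe_restrictScalars',
      LinearMap.coe_toContinuousLinearMap', Matrix.traceLinearMap_apply] using h
  have hΦ : HasDerivAt (fun t : ℝ => ((NS : ℂ)⁻¹ * ((Rhalf * (F₀ + t • E) * (F₀ + t • E)ᴴ * Rhalf) *
      Ring.inverse (1 + ((ρ / (1 + ρ * δ (F₀ + t • E)) : ℝ) : ℂ) •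
        (Rhalf * (F₀ + t • E) * (F₀ + t • E)ᴴ * Rhalf))).trace).re)
      (((NS : ℂ)⁻¹ * (B * Mm + T * -(Mm * N' * Mm)).trace).re) 0 := by
    have h := Complex.reCLM.hasFDerivAt.comp_hasDerivAt (0:ℝ) (htr.const_mul ((NS:ℂ)⁻¹))
    simpa only [Function.comp_def, Complex.reCLM_apply] using h
  -- the fixed point equation along the line
  have hev : ∀ᶠ t in nhds (0:ℝ), δ (F₀ + t • E) =
      ((NS : ℂ)⁻¹ * ((Rhalf * (F₀ + t • E) * (F₀ + t • E)ᴴ * Rhalf) *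
      Ring.inverse (1 + ((ρ / (1 + ρ * δ (F₀ + t • E)) : ℝ) : ℂ) •
        (Rhalf * (F₀ + t • E) * (F₀ + t • E)ᴴ * Rhalf))).trace).re := by
    have hcont : Filter.Tendsto (fun t : ℝ => F₀ + t • E) (nhds 0) (nhds F₀) := by
      have := hL.continuousAt.tendsto
      rwa [h0L] at this
    filter_upwards [hcont.eventually hfix] with t ht
    rw [← Matrix.nonsing_inv_eq_ringInverse, ← ht, Complex.ofReal_re]
  have hf' : HasDerivAt (fun t : ℝ => δ (F₀ + t • E))
      (((NS : ℂ)⁻¹ * (B * Mm + T * -(Mm * N' * Mm)).trace).re) 0 :=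
    hΦ.congr_of_eventuallyEq hev
  have heq : D E = ((NS : ℂ)⁻¹ * (B * Mm + T * -(Mm * N' * Mm)).trace).re := hf.unique hf'
  -- Key matrix identity : α • (Mm * T * Mm) = Mm - Mm * Mm
  have hkey : ((α:ℝ):ℂ) • (Mm * (T * Mm)) = Mm - Mm * Mm := by
    have h1 : Mm + ((α:ℝ):ℂ) • (Mm * T) = 1 := by
      have := hinv1
      rwa [Matrix.mul_add, Matrix.mul_one, Matrix.mul_smul] at this
    have h2 : ((α:ℝ):ℂ) • (Mm * T) = 1 - Mm := by
      rw [← h1]; abel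
    calc ((α:ℝ):ℂ) • (Mm * (T * Mm)) = (((α:ℝ):ℂ) • (Mm * T)) * Mm := by
          rw [Matrix.smul_mul, Matrix.mul_assoc]
      _ = (1 - Mm) * Mm := by rw [h2]
      _ = Mm - Mm * Mm := by rw [Matrix.sub_mul, Matrix.one_mul]
  -- trace computation
  have htrace_eq : (B * Mm + T * -(Mm * N' * Mm)).trace
      = (B * (Mm * Mm)).trace + ((α^2 * D E : ℝ) : ℂ) * ((T * Mm) * (T * Mm)).trace := by
    have hTMN : T * -(Mm * N' * Mm) =
        -(((α:ℝ):ℂ) • (T * (Mm * (B * Mm))) + ((-(α^2) * D E : ℝ) : ℂ) • (T * (Mm * (T * Mm)))) := by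
      rw [hN']
      simp only [Matrix.mul_neg, Matrix.add_mul, Matrix.mul_add, Matrix.smul_mul,
        Matrix.mul_smul, Matrix.mul_assoc]
    rw [hTMN]
    rw [Matrix.trace_add, Matrix.trace_neg, Matrix.trace_add, Matrix.trace_smul, Matrix.trace_smul]
    have hcyc : (T * (Mm * (B * Mm))).trace = (B * (Mm * (T * Mm))).trace := by
      rw [show T * (Mm * (B * Mm)) = (T * Mm * B) * Mm by simp [Matrix.mul_assoc],
        Matrix.trace_mul_comm,
        show Mm * (T * Mm * B) = (Mm * (T * Mm)) * B by simp [Matrix.mul_assoc],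
        Matrix.trace_mul_comm]
    have hmain : (B * Mm).trace - ((α:ℝ):ℂ) * (T * (Mm * (B * Mm))).trace
        = (B * (Mm * Mm)).trace := by
      rw [hcyc]
      have h5 : ((α:ℝ):ℂ) * (B * (Mm * (T * Mm))).trace = (B * (Mm - Mm * Mm)).trace := by
        rw [← smul_eq_mul, ← Matrix.trace_smul, ← Matrix.mul_smul, hkey]
      rw [h5, Matrix.mul_sub, Matrix.trace_sub]
      abel
    have hcyc2 : (T * (Mm * (T * Mm))).trace = ((T * Mm) * (T * Mm)).trace := by
      rw [Matrix.mul_assoc]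
    rw [hcyc2, smul_eq_mul, smul_eq_mul, ← hmain, hcyc]
    push_cast
    ring
  -- Re of the B-trace
  have hBtrace : ((B * (Mm * Mm)).trace).re = 2 * ((Eᴴ * Q).trace).re := by
    have hQH : Qᴴ = F₀ᴴ * (Rhalf * ((Mm * Mm) * Rhalf)) := by
      rw [hQ]
      simp only [conjTranspose_mul, hRh, hMmH, Matrix.mul_assoc]
    have hsplit : B * (Mm * Mm) = Rhalf * E * F₀ᴴ * Rhalf * (Mm * Mm)
        + Rhalf * F₀ * Eᴴ * Rhalf * (Mm * Mm) := by
      rw [hB, Matrix.add_mul]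
    have h1 : (Rhalf * F₀ * Eᴴ * Rhalf * (Mm * Mm)).trace = (Eᴴ * Q).trace := by
      rw [show Rhalf * F₀ * Eᴴ * Rhalf * (Mm * Mm)
            = (Rhalf * F₀) * (Eᴴ * (Rhalf * (Mm * Mm))) by simp [Matrix.mul_assoc],
        Matrix.trace_mul_comm,
        show Eᴴ * (Rhalf * (Mm * Mm)) * (Rhalf * F₀) = Eᴴ * Q by rw [hQ]; simp [Matrix.mul_assoc]]
    have h2 : (Rhalf * E * F₀ᴴ * Rhalf * (Mm * Mm)).trace = (E * Qᴴ).trace := by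
      rw [show Rhalf * E * F₀ᴴ * Rhalf * (Mm * Mm)
            = (Rhalf * E) * (F₀ᴴ * (Rhalf * (Mm * Mm))) by simp [Matrix.mul_assoc],
        Matrix.trace_mul_comm,
        show F₀ᴴ * (Rhalf * (Mm * Mm)) * (Rhalf * E) = (F₀ᴴ * (Rhalf * ((Mm * Mm) * Rhalf))) * E
          by simp [Matrix.mul_assoc],
        Matrix.trace_mul_comm, ← hQH]
    have h3 : ((E * Qᴴ).trace).re = ((Eᴴ * Q).trace).re := by
      have h6 : (E * Qᴴ)ᴴ = Q * Eᴴ := by simp [conjTranspose_mul]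
      have h4 : ((E * Qᴴ).trace) = star ((Q * Eᴴ).trace) := by
        rw [← h6, Matrix.trace_conjTranspose, star_star]
      rw [h4, Matrix.trace_mul_comm, Complex.star_def, Complex.conj_re]
    rw [hsplit, Matrix.trace_add, Complex.add_re, h1, h2, h3]
    ring
  -- assemble
  have hNSne : ((NS:ℝ)) ≠ 0 := by positivity
  have hre : ((NS : ℂ)⁻¹ * (B * Mm + T * -(Mm * N' * Mm)).trace).re
      = (NS:ℝ)⁻¹ * (2 * ((Eᴴ * Q).trace).re + (α^2 * D E) * (((T * Mm) * (T * Mm)).trace).re) := by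
    rw [htrace_eq]
    have hcast : ((NS : ℂ))⁻¹ = (((NS:ℝ)⁻¹ : ℝ) : ℂ) := by push_cast; ring
    rw [hcast, Complex.re_ofReal_mul, Complex.add_re, Complex.re_ofReal_mul, hBtrace]
  rw [hre] at heq
  -- goal reduction
  have hgoal : ((Eᴴ * (((d⁻¹:ℝ):ℂ) • Q)).trace).re = d⁻¹ * ((Eᴴ * Q).trace).re := by
    rw [Matrix.mul_smul, Matrix.trace_smul, smul_eq_mul, Complex.re_ofReal_mul]
  rw [hgoal]
  have hDE : (NS:ℝ) * D E = 2 * ((Eᴴ * Q).trace).re + (α^2 * D E) * (((T * Mm) * (T * Mm)).trace).re := by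
    have h7 := congrArg (fun x : ℝ => (NS:ℝ) * x) heq
    rw [← mul_assoc, mul_inv_cancel₀ hNSne, one_mul] at h7
    exact h7
  have hdd : d * D E = 2 * ((Eᴴ * Q).trace).re := by
    rw [hd]
    linear_combination hDE
  have hfin : D E = d⁻¹ * (d * D E) := by
    rw [← mul_assoc, inv_mul_cancel₀ hd0, one_mul]
  rw [hfin, hdd]
  ring
end
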